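/- Let G = D ⋊_φ ℤ be a semidirect product where φ: ℤ → Aut(D). For g₂ = (h₂, n) with n ≠ 0, the conjugacy class of g₂ in G equals the union over i = 0, …, |n|−1 of the D-conjugacy classes of the conjugates t^i g₂ t^{-i}, where t = (1, 1). -/

import Mathlib

open SemidirectProduct Multiplicative

section aux
variable {D : Type*} [Group D] (φ : Multiplicative ℤ →* MulAut D)

private lemma tpow' (k : ℤ) :
    (inr (ofAdd 1) : D ⋊[φ] Multiplicative ℤ) ^ k = inr (ofAdd k) := by
  rw [← map_zpow]; congr 1; simp [← ofAdd_zsmul]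

private lemma conj_inl' (x : D ⋊[φ] Multiplicative ℤ) (d : D) :
    ∃ e : D, x * inl d * x⁻¹ = inl e := by
  refine ⟨(x * inl d * x⁻¹).left, ?_⟩
  have h : rightHom (x * inl d * x⁻¹) = 1 := by simp
  ext
  · simp
  · simpa [rightHom] using h

variable (g : D ⋊[φ] Multiplicative ℤ)

private def Tsub' : Subgroup (D ⋊[φ] Multiplicative ℤ) where
  carrier := {x | ∃ d : D, x * g * x⁻¹ = inl d * g * (inl d)⁻¹}
  one_mem' := ⟨1, by simp⟩
  mul_mem' := by
    rintro x y ⟨d, hd⟩ ⟨e, he⟩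
    obtain ⟨f, hf⟩ := conj_inl' φ x e
    refine ⟨f * d, ?_⟩
    have h1 : x * y * g * (x * y)⁻¹ = x * (y * g * y⁻¹) * x⁻¹ := by group
    rw [h1, he]
    calc x * (inl e * g * (inl e)⁻¹) * x⁻¹
        = (x * inl e * x⁻¹) * (x * g * x⁻¹) * (x * inl e * x⁻¹)⁻¹ := by group
      _ = inl (f * d) * g * (inl (f * d))⁻¹ := by
          rw [hf, hd]; simp [mul_assoc]
  inv_mem' := by
    rintro x ⟨d, hd⟩
    obtain ⟨f, hf⟩ := conj_inl' φ x⁻¹ d⁻¹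
    refine ⟨f, ?_⟩
    have h1 : x⁻¹ * g * x⁻¹⁻¹ =
        (x⁻¹ * inl d⁻¹ * x⁻¹⁻¹) * (x⁻¹ * (inl d * g * (inl d)⁻¹) * x) *
          (x⁻¹ * inl d⁻¹ * x⁻¹⁻¹)⁻¹ := by
      simp only [map_inv]; group
    rw [h1, ← hd, hf]
    group

end aux

theorem stmt5 (D : Type*) [Group D] (φ : Multiplicative ℤ →* MulAut D)
    (h₂ : D) (n : ℤ) (hn : n ≠ 0) :
    conjugatesOf (⟨h₂, Multiplicative.ofAdd n⟩ : D ⋊[φ] Multiplicative ℤ) =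
      ⋃ i ∈ Finset.range n.natAbs,
        Set.range (fun d : D =>
          (⟨d, 1⟩ : D ⋊[φ] Multiplicative ℤ) *
            ((⟨1, Multiplicative.ofAdd 1⟩ : D ⋊[φ] Multiplicative ℤ) ^ i *
              (⟨h₂, Multiplicative.ofAdd n⟩ : D ⋊[φ] Multiplicative ℤ) *
              ((⟨1, Multiplicative.ofAdd 1⟩ : D ⋊[φ] Multiplicative ℤ) ^ i)⁻¹) *
            (⟨d, 1⟩ : D ⋊[φ] Multiplicative ℤ)⁻¹) := by
  set G := D ⋊[φ] Multiplicative ℤ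
  set g : G := ⟨h₂, ofAdd n⟩ with hgdef
  set t : G := inr (ofAdd 1) with htdef
  have hmk : ∀ d : D, (⟨d, 1⟩ : G) = inl d := fun d => rfl
  have htg : (⟨(1 : D), ofAdd 1⟩ : G) = t := by
    rw [htdef]; ext <;> simp
  -- t^n is in Tsub'
  have hgT : g ∈ Tsub' φ g := ⟨1, by simp⟩
  have hinlT : ∀ d : D, inl d ∈ Tsub' φ g := fun d => ⟨d, rfl⟩
  have htnT : (inr (ofAdd n) : G) ∈ Tsub' φ g := by
    have : (inr (ofAdd n) : G) = (inl h₂)⁻¹ * g := by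
      rw [hgdef, mk_eq_inl_mul_inr, ← mul_assoc, inv_mul_cancel, one_mul]
    rw [this]
    exact mul_mem (inv_mem (hinlT h₂)) hgT
  have hmulT : ∀ q : ℤ, t ^ (n * q) ∈ Tsub' φ g := by
    intro q
    have : t ^ (n * q) = (inr (ofAdd n) : G) ^ q := by
      rw [zpow_mul, tpow' φ n]
    rw [this]
    exact zpow_mem htnT q
  -- main reduction lemma
  have main : ∀ m : ℤ, ∃ i : ℕ, i < n.natAbs ∧ ∃ e : D,
      t ^ m * g * (t ^ m)⁻¹ = inl e * (t ^ (i : ℤ) * g * (t ^ (i : ℤ))⁻¹) * (inl e)⁻¹ := by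
    intro m
    set N : ℤ := (n.natAbs : ℤ) with hNdef
    have hN0 : 0 < N := by
      simp only [hNdef]
      exact_mod_cast Int.natAbs_pos.mpr hn
    set r : ℤ := m % N with hrdef
    have hr0 : 0 ≤ r := Int.emod_nonneg m (by omega)
    have hrN : r < N := Int.emod_lt_of_pos m hN0
    -- m - r is a multiple of n
    have hsub : ∃ q : ℤ, m - r = n * q := by
      have h1 : m - r = N * (m / N) := by
        have := Int.mul_ediv_add_emod m N
        omega
      rcases Int.natAbs_eq n with h | h
      · exact ⟨m / N, by rw [h1, hNdef, ← h]⟩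
      · exact ⟨-(m / N), by rw [h1, h]; ring⟩
    obtain ⟨q, hq⟩ := hsub
    have hTmr : t ^ (m - r) ∈ Tsub' φ g := hq ▸ hmulT q
    obtain ⟨e₀, he₀⟩ := hTmr
    refine ⟨r.toNat, by omega, φ (ofAdd r) e₀, ?_⟩
    have hrcast : ((r.toNat : ℤ)) = r := Int.toNat_of_nonneg hr0
    rw [hrcast]
    have hm : t ^ m = t ^ r * t ^ (m - r) := by
      rw [← zpow_add]; congr 1; omega
    have haut : t ^ r * inl e₀ * (t ^ r)⁻¹ = inl (φ (ofAdd r) e₀) := by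
      rw [htdef, tpow' φ r, ← map_inv, ← inl_aut]
    calc t ^ m * g * (t ^ m)⁻¹
        = (t ^ r) * (t ^ (m - r) * g * (t ^ (m - r))⁻¹) * (t ^ r)⁻¹ := by rw [hm]; simp only [mul_inv_rev, ← zpow_neg]; group
      _ = (t ^ r) * (inl e₀ * g * (inl e₀)⁻¹) * (t ^ r)⁻¹ := by rw [he₀]
      _ = (t ^ r * inl e₀ * (t ^ r)⁻¹) * (t ^ r * g * (t ^ r)⁻¹) *
            (t ^ r * inl e₀ * (t ^ r)⁻¹)⁻¹ := by simp only [mul_inv_rev, ← zpow_neg]; group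
      _ = inl (φ (ofAdd r) e₀) * (t ^ r * g * (t ^ r)⁻¹) * (inl (φ (ofAdd r) e₀))⁻¹ := by
          rw [haut]
  -- Now the set equality
  ext x
  simp only [Set.mem_iUnion, Set.mem_range, Finset.mem_range]
  constructor
  · rintro hx
    obtain ⟨c, hc⟩ := isConj_iff.mp hx
    obtain ⟨i, hi, e, he⟩ := main (toAdd c.right)
    refine ⟨i, hi, c.left * e, ?_⟩
    have hc2 : c = inl c.left * t ^ (toAdd c.right : ℤ) := by
      rw [htdef, tpow', ofAdd_toAdd, inl_left_mul_inr_right]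
    have hx2 : x = inl c.left * (t ^ (toAdd c.right : ℤ) * g * (t ^ (toAdd c.right : ℤ))⁻¹) *
        (inl c.left)⁻¹ := by
      rw [← hc]; conv_lhs => rw [hc2]
      simp only [← zpow_neg]; group
    rw [hmk, htg, ← zpow_natCast t i, hx2, he, map_mul]
    simp only [← zpow_neg]; group
  · rintro ⟨i, hi, d, hd⟩
    rw [hmk, htg] at hd
    show IsConj g x
    refine isConj_iff.mpr ⟨inl d * t ^ i, ?_⟩
    rw [← hd]; group
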